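/- Tensoring with a Gibbs state does not change which transitions are possible: let β > 0, let E : Fin n → ℝ and E′ : Fin n′ → ℝ be energy functions with Gibbs distributions τ and τ′ respectively, and let p, q be probability distributions on Fin n. Consider the product system Fin n × Fin n′ with energies (i, j) ↦ E_i + E′_j and Gibbs distribution τ ⊗ τ′. Then there exists a stochastic matrix G′ on the product system with G′(τ ⊗ τ′) = τ ⊗ τ′ and G′(p ⊗ τ′) = q ⊗ τ′ if and only if there exists a stochastic matrix G on Fin n with Gτ = τ and Gp = q. -/

import Mathlib

open Finset

/-- A probability distribution on a finite type. -/
def IsProbDist {ι : Type*} [Fintype ι] (p : ι → ℝ) : Prop :=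
  (∀ i, 0 ≤ p i) ∧ ∑ i, p i = 1

/-- A (column-)stochastic matrix: nonnegative entries, each column sums to 1.
It acts on probability vectors by `(G.mulVec p) j = ∑ i, G j i * p i`. -/
def IsStochastic {ι : Type*} [Fintype ι] (G : Matrix ι ι ℝ) : Prop :=
  (∀ i j, 0 ≤ G i j) ∧ ∀ j, ∑ i, G i j = 1

/-- The partition function `Z = ∑ i, exp (-β E i)`. -/
noncomputable def partZ {ι : Type*} [Fintype ι] (β : ℝ) (E : ι → ℝ) : ℝ :=
  ∑ i, Real.exp (-(β * E i))

/-- The Gibbs distribution `τ i = exp (-β E i) / Z`. -/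
noncomputable def gibbs {ι : Type*} [Fintype ι] (β : ℝ) (E : ι → ℝ) : ι → ℝ :=
  fun i => Real.exp (-(β * E i)) / partZ β E

/-- The product distribution `(p ⊗ p') (i, j) = p i * p' j`. -/
def prodDist {ι κ : Type*} (p : ι → ℝ) (p' : κ → ℝ) : ι × κ → ℝ :=
  fun x => p x.1 * p' x.2

lemma gibbs_prod {n n' : ℕ} (β : ℝ) (E : Fin n → ℝ) (E' : Fin n' → ℝ) :
    gibbs β (fun x : Fin n × Fin n' => E x.1 + E' x.2) =
      prodDist (gibbs β E) (gibbs β E') := by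
  have hZ : partZ β (fun x : Fin n × Fin n' => E x.1 + E' x.2)
      = partZ β E * partZ β E' := by
    simp only [partZ, Fintype.sum_prod_type, mul_add, neg_add, Real.exp_add,
      ← Finset.sum_mul, ← Finset.mul_sum]
  funext x
  simp only [gibbs, prodDist, hZ, mul_add, neg_add, Real.exp_add, div_mul_div_comm]

lemma gibbs_nonneg {m : ℕ} (β : ℝ) (E : Fin m → ℝ) (i : Fin m) : 0 ≤ gibbs β E i := by
  apply div_nonneg (Real.exp_pos _).le
  exact Finset.sum_nonneg fun j _ => (Real.exp_pos _).le

lemma partZ_pos {m : ℕ} (hm : 0 < m) (β : ℝ) (E : Fin m → ℝ) : 0 < partZ β E := by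
  have : Nonempty (Fin m) := Fin.pos_iff_nonempty.mp hm
  exact Finset.sum_pos (fun j _ => Real.exp_pos _) Finset.univ_nonempty

lemma gibbs_sum {m : ℕ} (hm : 0 < m) (β : ℝ) (E : Fin m → ℝ) : ∑ i, gibbs β E i = 1 := by
  simp only [gibbs]; rw [← Finset.sum_div, ← partZ, div_self (partZ_pos hm β E).ne']


/-- Tensoring with a Gibbs state does not change which transitions are
possible: on the product system `Fin n × Fin n'` with energies `(i,j) ↦ E i + E' j`
(whose Gibbs distribution is `τ ⊗ τ'`), there is a Gibbs-preserving stochastic matrix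
mapping `p ⊗ τ'` to `q ⊗ τ'` iff there is a Gibbs-preserving stochastic matrix on
`Fin n` mapping `p` to `q`. -/
theorem tensor_gibbs_iff {n n' : ℕ} (hn' : 0 < n') (β : ℝ) (hβ : 0 < β)
    (E : Fin n → ℝ) (E' : Fin n' → ℝ) (p q : Fin n → ℝ)
    (hp : IsProbDist p) (hq : IsProbDist q) :
    (∃ G' : Matrix (Fin n × Fin n') (Fin n × Fin n') ℝ, IsStochastic G' ∧
        G'.mulVec (gibbs β (fun x : Fin n × Fin n' => E x.1 + E' x.2)) =
          gibbs β (fun x : Fin n × Fin n' => E x.1 + E' x.2) ∧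
        G'.mulVec (prodDist p (gibbs β E')) = prodDist q (gibbs β E')) ↔
      (∃ G : Matrix (Fin n) (Fin n) ℝ, IsStochastic G ∧
        G.mulVec (gibbs β E) = gibbs β E ∧ G.mulVec p = q) := by
  set τ' := gibbs β E' with hτ'def
  have hτ'sum : ∑ l, τ' l = 1 := gibbs_sum hn' β E'
  have hτ'nn : ∀ l, 0 ≤ τ' l := gibbs_nonneg β E'
  constructor
  · rintro ⟨G', ⟨hGn, hGc⟩, hGτ, hGp⟩
    refine ⟨fun i k => ∑ j, ∑ l, G' (i, j) (k, l) * τ' l, ⟨?_, ?_⟩, ?_, ?_⟩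
    · intro i k
      exact Finset.sum_nonneg fun j _ => Finset.sum_nonneg fun l _ =>
        mul_nonneg (hGn _ _) (hτ'nn l)
    · intro k
      have h1 : ∑ i, ∑ j, ∑ l, G' (i, j) (k, l) * τ' l
          = ∑ a : Fin n × Fin n', ∑ l, G' a (k, l) * τ' l := by
        rw [Fintype.sum_prod_type]
      rw [h1, Finset.sum_comm]
      have h2 : ∀ l, ∑ a : Fin n × Fin n', G' a (k, l) * τ' l = τ' l := by
        intro l
        rw [← Finset.sum_mul, hGc (k, l), one_mul]
      simp only [h2]
      exact hτ'sum
    all_goals {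
      have key : ∀ v : Fin n → ℝ,
          (Matrix.mulVec (fun i k => ∑ j, ∑ l, G' (i, j) (k, l) * τ' l) v)
            = fun i => ∑ j, (G'.mulVec (prodDist v τ')) (i, j) := by
        intro v
        funext i
        simp only [Matrix.mulVec, dotProduct, prodDist, Fintype.sum_prod_type,
          Finset.sum_mul]
        rw [Finset.sum_comm]
        exact Finset.sum_congr rfl fun j _ => Finset.sum_congr rfl fun k _ =>
          Finset.sum_congr rfl fun l _ => by ring
      first
      | (rw [key, show prodDist (gibbs β E) τ' =
              gibbs β (fun x : Fin n × Fin n' => E x.1 + E' x.2) from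
              (gibbs_prod β E E').symm, hGτ, gibbs_prod]
         funext i
         simp only [prodDist, ← Finset.mul_sum, hτ'sum, gibbs_sum hn' β E', mul_one])
      | (rw [key, hGp]
         funext i
         simp only [prodDist, ← Finset.mul_sum, hτ'sum, mul_one])
    }
  · rintro ⟨G, ⟨hGn, hGc⟩, hGτ, hGp⟩
    refine ⟨fun a b => G a.1 b.1 * (if a.2 = b.2 then 1 else 0), ⟨?_, ?_⟩, ?_, ?_⟩
    · intro a b
      have := hGn a.1 b.1
      positivity
    · intro b
      rw [Fintype.sum_prod_type]
      simp only [mul_ite, mul_one, mul_zero, Finset.sum_ite_eq', Finset.mem_univ, if_true]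
      exact hGc b.1
    all_goals {
      have key : ∀ v : Fin n → ℝ,
          (Matrix.mulVec (fun a b : Fin n × Fin n' =>
              G a.1 b.1 * (if a.2 = b.2 then 1 else 0)) (prodDist v τ'))
            = prodDist (G.mulVec v) τ' := by
        intro v
        funext a
        simp only [Matrix.mulVec, dotProduct, prodDist, Fintype.sum_prod_type,
          mul_ite, mul_one, mul_zero, ite_mul, zero_mul, Finset.sum_ite_eq', Finset.sum_ite_eq,
          Finset.mem_univ, if_true, Finset.sum_mul]
        exact Finset.sum_congr rfl fun k _ => by ring
      first
      | (rw [gibbs_prod, key, hGτ])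
      | (rw [key, hGp])
    }
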